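/- (Monotonicity of unnormalized Rademacher complexity over distributions) For any integers 0 ≤ n ≤ m and any distribution D, n·R_n(F, D) ≤ m·R_m(F, D), where R_m(F, D) = E_{S∼D^m}[R̂_S(F)]. -/

import Mathlib

open scoped BigOperators
open MeasureTheory

/-- Sign of a Rademacher variable encoded as a Boolean. -/
noncomputable def rsign (b : Bool) : ℝ := if b then 1 else -1

/-- Empirical Rademacher complexity of a family `F` with respect to a sample. -/
noncomputable def empRad {X : Type*} (F : Set (X → ℝ)) (m : ℕ) (x : Fin m → X) : ℝ :=
  (∑ η : Fin m → Bool,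
    sSup {r : ℝ | ∃ f ∈ F, r = (1 / (m : ℝ)) * ∑ i, rsign (η i) * f (x i)}) / 2 ^ m

/-- Rademacher complexity of `F` over `m` i.i.d. samples drawn from `D`. -/
noncomputable def Rad {X : Type*} [MeasurableSpace X] (F : Set (X → ℝ)) (m : ℕ)
    (D : Measure X) : ℝ :=
  ∫ x : Fin m → X, empRad F m x ∂(Measure.pi fun _ : Fin m => D)

/-- Unnormalized version of the inner sets. -/
def Tset {X : Type*} (F : Set (X → ℝ)) (m : ℕ) (x : Fin m → X) (η : Fin m → Bool) : Set ℝ :=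
  {r : ℝ | ∃ f ∈ F, r = ∑ i, rsign (η i) * f (x i)}

/-- Unnormalized empirical Rademacher complexity. -/
noncomputable def Gfun {X : Type*} (F : Set (X → ℝ)) (m : ℕ) (x : Fin m → X) : ℝ :=
  (∑ η : Fin m → Bool, sSup (Tset F m x η)) / 2 ^ m

lemma abs_rsign (b : Bool) : |rsign b| = 1 := by cases b <;> simp [rsign]

lemma Tset_nonempty {X : Type*} {F : Set (X → ℝ)} (hF : F.Nonempty) (m : ℕ)
    (x : Fin m → X) (η : Fin m → Bool) : (Tset F m x η).Nonempty := by
  obtain ⟨f, hf⟩ := hF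
  exact ⟨_, f, hf, rfl⟩

lemma Tset_bddAbove {X : Type*} {F : Set (X → ℝ)} {C : ℝ}
    (hbdd : ∀ f ∈ F, ∀ x : X, |f x| ≤ C) (m : ℕ)
    (x : Fin m → X) (η : Fin m → Bool) : BddAbove (Tset F m x η) := by
  refine ⟨(m : ℝ) * C, ?_⟩
  rintro r ⟨f, hf, rfl⟩
  calc ∑ i, rsign (η i) * f (x i) ≤ ∑ i : Fin m, C := by
        refine Finset.sum_le_sum fun i _ => ?_
        calc rsign (η i) * f (x i) ≤ |rsign (η i) * f (x i)| := le_abs_self _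
          _ = |f (x i)| := by rw [abs_mul, abs_rsign, one_mul]
          _ ≤ C := hbdd f hf (x i)
    _ = (m : ℝ) * C := by simp [mul_comm]

lemma mul_empRad {X : Type*} {F : Set (X → ℝ)} (hF : F.Nonempty) {C : ℝ}
    (hbdd : ∀ f ∈ F, ∀ x : X, |f x| ≤ C) (m : ℕ) (x : Fin m → X) :
    (m : ℝ) * empRad F m x = Gfun F m x := by
  cases m with
  | zero =>
    have h : ∀ η : Fin 0 → Bool, Tset F 0 x η = {0} := by
      intro η
      ext r
      simp only [Tset, Set.mem_setOf_eq, Set.mem_singleton_iff, Finset.univ_eq_empty,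
        Finset.sum_empty]
      exact ⟨fun ⟨f, _, h⟩ => h, fun h => ⟨hF.choose, hF.choose_spec, h⟩⟩
    simp [Gfun, h, csSup_singleton]
  | succ k =>
    have hk : ((k : ℝ) + 1) ≠ 0 := by positivity
    have key : ∀ η : Fin (k+1) → Bool,
        sSup {r : ℝ | ∃ f ∈ F, r = (1 / ((k+1 : ℕ) : ℝ)) * ∑ i, rsign (η i) * f (x i)}
        = (1 / ((k+1 : ℕ) : ℝ)) * sSup (Tset F (k+1) x η) := by
      intro η
      have himg : {r : ℝ | ∃ f ∈ F, r = (1 / ((k+1 : ℕ) : ℝ)) * ∑ i, rsign (η i) * f (x i)}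
          = (fun t => (1 / ((k+1 : ℕ) : ℝ)) * t) '' Tset F (k+1) x η := by
        ext r
        constructor
        · rintro ⟨f, hf, rfl⟩; exact ⟨_, ⟨f, hf, rfl⟩, rfl⟩
        · rintro ⟨t, ⟨f, hf, rfl⟩, rfl⟩; exact ⟨f, hf, rfl⟩
      rw [himg]
      refine (Monotone.map_csSup_of_continuousAt ?_ ?_ (Tset_nonempty hF _ _ _)
        (Tset_bddAbove hbdd _ _ _)).symm
      · exact (continuous_const.mul continuous_id).continuousAt
      · intro a b hab
        have h0 : (0:ℝ) ≤ 1 / ((k+1 : ℕ) : ℝ) := by positivity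
        exact mul_le_mul_of_nonneg_left hab h0
    simp only [empRad, Gfun]
    rw [Finset.sum_congr rfl fun η _ => key η, ← Finset.mul_sum]
    push_cast
    field_simp

lemma step_pointwise {X : Type*} {F : Set (X → ℝ)} (hF : F.Nonempty) {C : ℝ}
    (hbdd : ∀ f ∈ F, ∀ x : X, |f x| ≤ C) (m : ℕ) (x : Fin (m+1) → X) :
    Gfun F m (Fin.tail x) ≤ Gfun F (m+1) x := by
  have key : ∀ η' : Fin m → Bool,
      2 * sSup (Tset F m (Fin.tail x) η')
        ≤ sSup (Tset F (m+1) x (Fin.cons true η'))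
          + sSup (Tset F (m+1) x (Fin.cons false η')) := by
    intro η'
    have h2 : 2 * sSup (Tset F m (Fin.tail x) η')
        = sSup ((fun t => 2 * t) '' Tset F m (Fin.tail x) η') := by
      refine Monotone.map_csSup_of_continuousAt ?_ ?_ (Tset_nonempty hF _ _ _)
        (Tset_bddAbove hbdd _ _ _)
      · exact (continuous_const.mul continuous_id).continuousAt
      · intro a b hab; linarith
    rw [h2]
    refine csSup_le ((Tset_nonempty hF _ _ _).image _) ?_
    rintro r ⟨t, ⟨f, hf, rfl⟩, rfl⟩
    have hmem1 : rsign true * f (x 0) + ∑ i, rsign (η' i) * f (x i.succ)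
        ∈ Tset F (m+1) x (Fin.cons true η') := by
      refine ⟨f, hf, ?_⟩
      rw [Fin.sum_univ_succ]
      simp [Fin.cons_succ, Fin.cons_zero]
    have hmem2 : rsign false * f (x 0) + ∑ i, rsign (η' i) * f (x i.succ)
        ∈ Tset F (m+1) x (Fin.cons false η') := by
      refine ⟨f, hf, ?_⟩
      rw [Fin.sum_univ_succ]
      simp [Fin.cons_succ, Fin.cons_zero]
    have hs1 := le_csSup (Tset_bddAbove hbdd _ x (Fin.cons true η')) hmem1
    have hs2 := le_csSup (Tset_bddAbove hbdd _ x (Fin.cons false η')) hmem2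
    have htail : ∀ i : Fin m, Fin.tail x i = x i.succ := fun i => rfl
    rw [show rsign true = 1 from rfl] at hs1
    rw [show rsign false = -1 from rfl] at hs2
    simp only [htail]
    linarith
  have hsum : ∑ η : Fin (m+1) → Bool, sSup (Tset F (m+1) x η)
      = ∑ η' : Fin m → Bool, (sSup (Tset F (m+1) x (Fin.cons true η'))
          + sSup (Tset F (m+1) x (Fin.cons false η'))) := by
    rw [← Equiv.sum_comp (Fin.consEquiv fun _ : Fin (m+1) => Bool)
      (fun η => sSup (Tset F (m+1) x η)), Fintype.sum_prod_type, Fintype.sum_bool,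
      ← Finset.sum_add_distrib]
    simp [Fin.consEquiv]
  simp only [Gfun, hsum]
  have hmain : 2 * ∑ η' : Fin m → Bool, sSup (Tset F m (Fin.tail x) η')
      ≤ ∑ η' : Fin m → Bool, (sSup (Tset F (m+1) x (Fin.cons true η'))
          + sSup (Tset F (m+1) x (Fin.cons false η'))) := by
    rw [Finset.mul_sum]
    exact Finset.sum_le_sum fun η' _ => key η'
  have h2m : (0:ℝ) < 2 ^ m := by positivity
  rw [div_le_div_iff₀ (by positivity) (by positivity), pow_succ]
  nlinarith [h2m.le]

lemma tail_measurePreserving {X : Type*} [MeasurableSpace X] (D : Measure X)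
    [IsProbabilityMeasure D] (m : ℕ) :
    MeasurePreserving (fun x : Fin (m+1) → X => Fin.tail x)
      (Measure.pi fun _ : Fin (m+1) => D) (Measure.pi fun _ : Fin m => D) := by
  have hmeas : Measurable (fun x : Fin (m+1) → X => Fin.tail x) :=
    measurable_pi_iff.2 fun i => measurable_pi_apply _
  refine ⟨hmeas, ?_⟩
  refine (Measure.pi_eq (μ := fun _ : Fin m => D) fun s hs => ?_).symm
  rw [Measure.map_apply hmeas (MeasurableSet.univ_pi hs)]
  have hpre : (fun x : Fin (m+1) → X => Fin.tail x) ⁻¹' Set.pi Set.univ s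
      = Set.pi Set.univ (Fin.cons Set.univ s) := by
    ext x
    simp only [Set.mem_preimage, Set.mem_pi, Set.mem_univ, true_implies]
    constructor
    · intro h i
      refine Fin.cases ?_ ?_ i
      · simp
      · intro j; simpa [Fin.cons_succ, Fin.tail] using h j
    · intro h j
      simpa [Fin.cons_succ, Fin.tail] using h j.succ
  rw [hpre, Measure.pi_pi, Fin.prod_univ_succ]
  simp [measure_univ]

lemma rad_step {X : Type*} [MeasurableSpace X]
    (F : Set (X → ℝ)) (hF : F.Nonempty)
    (C : ℝ) (hbdd : ∀ f ∈ F, ∀ x : X, |f x| ≤ C)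
    (D : Measure X) [IsProbabilityMeasure D]
    (hmeas : ∀ k : ℕ, Integrable (empRad F k) (Measure.pi fun _ : Fin k => D))
    (m : ℕ) :
    (m : ℝ) * Rad F m D ≤ ((m:ℝ) + 1) * Rad F (m+1) D := by
  have hG : ∀ k, Integrable (Gfun F k) (Measure.pi fun _ : Fin k => D) := by
    intro k
    have : Gfun F k = fun x => (k : ℝ) * empRad F k x := by
      funext x; rw [mul_empRad hF hbdd]
    rw [this]
    exact (hmeas k).const_mul _
  have hmp := tail_measurePreserving D m
  have hint_comp : Integrable (fun x : Fin (m+1) → X => Gfun F m (Fin.tail x))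
      (Measure.pi fun _ : Fin (m+1) => D) :=
    (hmp.integrable_comp (hG m).aestronglyMeasurable).2 (hG m)
  have h1 : (m : ℝ) * Rad F m D = ∫ x : Fin (m+1) → X, Gfun F m (Fin.tail x)
      ∂(Measure.pi fun _ : Fin (m+1) => D) := by
    rw [Rad, ← integral_const_mul]
    rw [show (fun x : Fin m → X => (m:ℝ) * empRad F m x) = Gfun F m from
      funext fun x => mul_empRad hF hbdd m x]
    rw [← hmp.map_eq, integral_map hmp.measurable.aemeasurable
      (hmp.map_eq ▸ (hG m).aestronglyMeasurable)]
  have h2 : ((m:ℝ) + 1) * Rad F (m+1) D = ∫ x : Fin (m+1) → X, Gfun F (m+1) x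
      ∂(Measure.pi fun _ : Fin (m+1) => D) := by
    rw [Rad, ← integral_const_mul]
    congr 1
    funext x
    have := mul_empRad hF hbdd (m+1) x
    push_cast at this
    exact this
  rw [h1, h2]
  exact integral_mono hint_comp (hG (m+1)) fun x => step_pointwise hF hbdd m x

/-- Monotonicity of the unnormalized Rademacher complexity over distributions:
for `n ≤ m`, `n · R_n(F, D) ≤ m · R_m(F, D)`. -/
theorem rad_unnormalized_mono {X : Type*} [MeasurableSpace X]
    (F : Set (X → ℝ)) (hF : F.Nonempty)
    (C : ℝ) (hbdd : ∀ f ∈ F, ∀ x : X, |f x| ≤ C)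
    (D : Measure X) [IsProbabilityMeasure D]
    (hmeas : ∀ k : ℕ, Integrable (empRad F k) (Measure.pi fun _ : Fin k => D))
    (n m : ℕ) (hnm : n ≤ m) :
    (n : ℝ) * Rad F n D ≤ (m : ℝ) * Rad F m D := by
  induction m, hnm using Nat.le_induction with
  | base => exact le_refl _
  | succ k hk ih =>
    calc (n : ℝ) * Rad F n D ≤ (k : ℝ) * Rad F k D := ih
      _ ≤ ((k:ℝ) + 1) * Rad F (k+1) D := rad_step F hF C hbdd D hmeas k
      _ = ((k+1 : ℕ) : ℝ) * Rad F (k+1) D := by push_cast; ring
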